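/- arXiv:2105.06124 — 2 statements merged into one kernel-verified Lean document; each statement's English description precedes it below -/
import Mathlib

section
/- Let n = k·s, let B ∈ ℝ^{n×n} be the FRC encoding matrix, and fix m with 0 ≤ m ≤ n and p_ss, p_as ∈ [0,1]. Suppose m designated slow workers each straggle independently with probability p_ss and the remaining n−m active workers each straggle independently with probability p_as; independently, a uniformly random permutation π of {1,…,n} shuffles the columns of B among the workers. Let S be the (random) set of column indices of B held by non-straggling workers and let err(A_S) := min over x ∈ ℝ^{|S|} of ‖A_S x − 1_n‖₂², where A_S is the submatrix of B with columns indexed by S. Then E[err(A_S)] = n · Σ_{r=0}^{n−s} P_r · C(n−s, r) / C(n, r), where P_r = Σ_{i=0}^{r} C(m,i) C(n−m, r−i) (1−p_ss)^i p_ss^{m−i} (1−p_as)^{r−i} p_as^{n−m−r+i}. -/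
/-- The FRC encoding matrix for `n = k·s` workers: block-diagonal with `k`
diagonal blocks each equal to the `s × s` all-ones matrix. -/
noncomputable def frcMatrix (n s : ℕ) : Fin n → Fin n → ℝ :=
  fun i j => if (i : ℕ) / s = (j : ℕ) / s then 1 else 0

/-- `err(A_S) = min_{x} ‖A_S x − 1_n‖₂²` where `A_S` is the submatrix of `B`
with columns indexed by `S`. -/
noncomputable def errSub {n : ℕ} (B : Fin n → Fin n → ℝ) (S : Finset (Fin n)) : ℝ :=
  sInf {e : ℝ | ∃ x : Fin n → ℝ,
    e = ∑ i : Fin n, ((∑ j ∈ S, x j * B i j) - 1) ^ 2}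

open Finset

lemma block_card (k s n : ℕ) (hs : 0 < s) (hn : n = k * s) {b : ℕ} (hb : b < k) :
    (Finset.univ.filter (fun i : Fin n => (i : ℕ) / s = b)).card = s := by
  have key : (Finset.univ.filter (fun i : Fin n => (i : ℕ) / s = b)).card
      = (Finset.range s).card := by
    refine Finset.card_nbij' (fun i => (i : ℕ) % s) (fun a => (⟨b * s + a % s, by
        subst hn
        have : a % s < s := Nat.mod_lt _ hs
        calc b * s + a % s < b * s + s := by omega
        _ = (b+1) * s := by ring
        _ ≤ k * s := Nat.mul_le_mul_right s hb⟩ : Fin n)) ?_ ?_ ?_ ?_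
    · intro i hi
      simp only [mem_coe, mem_filter, mem_univ, true_and] at hi
      simp [Nat.mod_lt _ hs]
    · intro a ha
      simp only [mem_coe, mem_range] at ha
      simp only [mem_coe, mem_filter, mem_univ, true_and]
      rw [mul_comm b s, Nat.mul_add_div hs, Nat.div_eq_of_lt (Nat.mod_lt _ hs), Nat.add_zero]
    · intro i hi
      simp only [mem_coe, mem_filter, mem_univ, true_and] at hi
      apply Fin.ext
      simp only []
      have h3 : s * b + (i : ℕ) % s = i := by rw [← hi]; exact Nat.div_add_mod _ s
      rw [Nat.mod_mod_of_dvd _ (dvd_refl s), mul_comm]; exact h3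
    · intro a ha
      simp only [mem_coe, mem_range] at ha
      simp only [Nat.mod_eq_of_lt ha]
      rw [add_comm, Nat.add_mul_mod_self_right, Nat.mod_eq_of_lt ha]
  simpa using key

lemma rows_card (k s n : ℕ) (hs : 0 < s) (hn : n = k * s)
    (P : ℕ → Prop) [DecidablePred P] :
    (Finset.univ.filter (fun i : Fin n => P ((i : ℕ) / s))).card
      = s * ((Finset.range k).filter P).card := by
  rw [Finset.card_eq_sum_card_fiberwise (f := fun i : Fin n => (i : ℕ) / s)
    (t := (Finset.range k).filter P) (by
      intro i hi
      simp only [mem_coe, mem_filter, mem_univ, true_and] at hi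
      simp only [mem_coe, mem_filter, mem_range]
      exact ⟨(Nat.div_lt_iff_lt_mul hs).2 (hn ▸ i.isLt), hi⟩)]
  rw [Finset.sum_congr rfl (fun b hb => ?_), Finset.sum_const, smul_eq_mul, mul_comm]
  simp only [mem_filter, mem_range] at hb
  rw [Finset.filter_filter]
  rw [show (Finset.univ.filter fun i : Fin n => P ((i:ℕ)/s) ∧ (i:ℕ)/s = b)
      = Finset.univ.filter (fun i : Fin n => (i : ℕ)/s = b) from
    Finset.filter_congr (fun i _ => by
      constructor
      · intro h; exact h.2
      · intro h; exact ⟨h ▸ hb.2, h⟩)]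
  exact block_card k s n hs hn hb.1

lemma errSub_eq (k s n : ℕ) (hs : 0 < s) (hn : n = k * s) (S : Finset (Fin n)) :
    errSub (frcMatrix n s) S
      = (s : ℝ) * (((Finset.range k).filter
          (fun b => ∀ j ∈ S, (j : ℕ) / s ≠ b)).card : ℝ) := by
  classical
  have hrows := rows_card k s n hs hn (fun b => ∀ j ∈ S, (j : ℕ) / s ≠ b)
  set R : Finset (Fin n) :=
    Finset.univ.filter (fun i : Fin n => ∀ j ∈ S, (j : ℕ) / s ≠ (i : ℕ) / s) with hR
  have hRcard : (R.card : ℝ)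
      = (s : ℝ) * (((Finset.range k).filter
          (fun b => ∀ j ∈ S, (j : ℕ) / s ≠ b)).card : ℝ) := by
    rw [hrows]; push_cast; ring
  apply IsLeast.csInf_eq
  constructor
  · -- membership: the averaging vector
    refine ⟨fun j => ((S.filter (fun j' : Fin n => (j' : ℕ) / s = (j : ℕ) / s)).card : ℝ)⁻¹, ?_⟩
    rw [hRcard.symm]
    rw [show ((R.card : ℝ)) = ∑ i : Fin n, (if i ∈ R then (1:ℝ) else 0) by
      rw [Finset.sum_ite_mem, Finset.univ_inter, Finset.sum_const, nsmul_eq_mul, mul_one]]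
    apply Finset.sum_congr rfl
    intro i _
    set c : ℕ := (S.filter (fun j' : Fin n => (j' : ℕ) / s = (i : ℕ) / s)).card with hc
    have hsum : (∑ j ∈ S, ((S.filter (fun j' : Fin n => (j' : ℕ) / s = (j : ℕ) / s)).card : ℝ)⁻¹
        * frcMatrix n s i j)
        = ∑ j ∈ S, (if (j : ℕ) / s = (i : ℕ) / s then (c : ℝ)⁻¹ else 0) := by
      apply Finset.sum_congr rfl
      intro j hj
      unfold frcMatrix
      by_cases h : (j : ℕ) / s = (i : ℕ) / s
      · rw [if_pos h, if_pos h.symm, mul_one, hc]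
        congr 3
        apply Finset.filter_congr
        intro j' _
        rw [h]
      · rw [if_neg h, if_neg (fun h' => h h'.symm), mul_zero]
    have hsum2 : (∑ j ∈ S, (if (j : ℕ) / s = (i : ℕ) / s then (c : ℝ)⁻¹ else 0))
        = (c : ℝ) * (c : ℝ)⁻¹ := by
      rw [Finset.sum_ite, Finset.sum_const_zero, add_zero, Finset.sum_const, nsmul_eq_mul, hc]
    rw [hsum, hsum2]
    by_cases hcz : c = 0
    · have hiR : i ∈ R := by
        rw [hR, Finset.mem_filter]
        refine ⟨Finset.mem_univ _, fun j hj => ?_⟩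
        intro heq
        have : j ∈ S.filter (fun j' : Fin n => (j' : ℕ) / s = (i : ℕ) / s) :=
          Finset.mem_filter.2 ⟨hj, heq⟩
        rw [← hc] at *
        exact absurd (Finset.card_eq_zero.1 hcz ▸ this) (Finset.notMem_empty j)
      simp [hcz, hiR]
    · have hiR : i ∉ R := by
        rw [hR, Finset.mem_filter]
        push_neg
        intro _
        obtain ⟨j, hj⟩ := Finset.card_pos.1 (Nat.pos_of_ne_zero hcz)
        rw [Finset.mem_filter] at hj
        exact ⟨j, hj.1, hj.2⟩
      rw [mul_inv_cancel₀ (Nat.cast_ne_zero.2 hcz)]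
      simp [hiR]
  · -- lower bound
    rintro e ⟨x, rfl⟩
    rw [← hRcard]
    calc (R.card : ℝ) = ∑ i ∈ R, (1:ℝ) := by rw [Finset.sum_const, nsmul_eq_mul, mul_one]
    _ = ∑ i ∈ R, ((∑ j ∈ S, x j * frcMatrix n s i j) - 1) ^ 2 := by
        apply Finset.sum_congr rfl
        intro i hi
        rw [hR, Finset.mem_filter] at hi
        have : (∑ j ∈ S, x j * frcMatrix n s i j) = 0 := by
          apply Finset.sum_eq_zero
          intro j hj
          unfold frcMatrix
          rw [if_neg (fun h => hi.2 j hj h.symm), mul_zero]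
        rw [this]; norm_num
    _ ≤ ∑ i : Fin n, ((∑ j ∈ S, x j * frcMatrix n s i j) - 1) ^ 2 := by
        apply Finset.sum_le_sum_of_subset_of_nonneg (Finset.subset_univ R)
        intro i _ _
        positivity

lemma perm_count (n : ℕ) (N U : Finset (Fin n)) :
    (Finset.univ.filter (fun π : Equiv.Perm (Fin n) => ∀ w ∈ N, π w ∈ U)).card
      = U.card.descFactorial N.card * (n - N.card).factorial := by
  classical
  -- fiberwise over the restriction embedding
  have hfib : ∀ f : (↥N ↪ Fin n), (∀ x : ↥N, f x ∈ U) →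
      (Finset.univ.filter (fun π : Equiv.Perm (Fin n) =>
        (∀ w ∈ N, π w ∈ U) ∧ ∀ x : ↥N, π x = f x)).card = (n - N.card).factorial := by
    intro f hf
    have hfilter : (Finset.univ.filter (fun π : Equiv.Perm (Fin n) =>
        (∀ w ∈ N, π w ∈ U) ∧ ∀ x : ↥N, π x = f x))
        = (Finset.univ.filter (fun π : Equiv.Perm (Fin n) => ∀ x : ↥N, π x = f x)) := by
      apply Finset.filter_congr
      intro π _
      constructor
      · exact fun h => h.2
      · intro h
        refine ⟨fun w hw => ?_, h⟩
        rw [h ⟨w, hw⟩]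
        exact hf ⟨w, hw⟩
    rw [hfilter, ← Fintype.card_subtype]
    -- use Equiv.Set.compl
    let e₀ : ((↑N : Set (Fin n))) ≃ (Set.range (fun x : (↑N : Set (Fin n)) => f ⟨x.1, x.2⟩)) :=
      Equiv.ofInjective _ (fun a b hab => by
        have := f.injective hab
        exact Subtype.ext (congrArg Subtype.val this))
    have hcompl := Equiv.Set.compl e₀
    have hcard1 : Fintype.card {π : Equiv.Perm (Fin n) // ∀ x : ↥N, π x = f x}
        = Fintype.card {e : Fin n ≃ Fin n // ∀ x : ((↑N : Set (Fin n))), e x = (e₀ x : Fin n)} := by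
      apply Fintype.card_congr
      apply Equiv.subtypeEquivRight
      intro π
      constructor
      · intro h x; exact h ⟨x.1, x.2⟩
      · intro h x; exact h ⟨x.1, x.2⟩
    rw [hcard1, Fintype.card_congr hcompl]
    have hrange : Fintype.card (Set.range (fun x : (↑N : Set (Fin n)) => f ⟨x.1, x.2⟩))
        = N.card := by
      rw [Set.card_range_of_injective (fun a b hab => by
        have := f.injective hab
        exact Subtype.ext (congrArg Subtype.val this))]
      simp
    have h1 : Fintype.card ((↑N : Set (Fin n))ᶜ : Set (Fin n)) = n - N.card := by
      rw [Fintype.card_compl_set]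
      simp
    have h2 : Fintype.card ((Set.range (fun x : (↑N : Set (Fin n)) => f ⟨x.1, x.2⟩))ᶜ : Set (Fin n))
        = n - N.card := by
      rw [Fintype.card_compl_set, hrange]
      simp
    rw [Fintype.card_equiv (Fintype.equivOfCardEq (h1.trans h2.symm)), h1]
  set g : Equiv.Perm (Fin n) → (↥N ↪ Fin n) :=
    fun π => (Function.Embedding.subtype _).trans π.toEmbedding with hg
  set B : Finset (↥N ↪ Fin n) := Finset.univ.filter (fun f => ∀ x : ↥N, f x ∈ U) with hB
  have hmaps : ∀ π ∈ Finset.univ.filter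
      (fun π : Equiv.Perm (Fin n) => ∀ w ∈ N, π w ∈ U), g π ∈ B := by
    intro π hπ
    simp only [Finset.mem_filter, Finset.mem_univ, true_and] at hπ
    simp only [hB, Finset.mem_filter, Finset.mem_univ, true_and]
    intro x
    exact hπ x.1 x.2
  rw [Finset.card_eq_sum_card_fiberwise hmaps]
  have hterm : ∀ f ∈ B, ((Finset.univ.filter
      (fun π : Equiv.Perm (Fin n) => ∀ w ∈ N, π w ∈ U)).filter (fun π => g π = f)).card
      = (n - N.card).factorial := by
    intro f hf
    rw [Finset.filter_filter]
    simp only [hB, Finset.mem_filter, Finset.mem_univ, true_and] at hf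
    rw [show (Finset.univ.filter (fun π : Equiv.Perm (Fin n) =>
        (∀ w ∈ N, π w ∈ U) ∧ g π = f))
        = (Finset.univ.filter (fun π : Equiv.Perm (Fin n) =>
        (∀ w ∈ N, π w ∈ U) ∧ ∀ x : ↥N, π x = f x)) from
      Finset.filter_congr (fun π _ => by
        simp only [hg, DFunLike.ext_iff]
        rfl)]
    exact hfib f hf
  rw [Finset.sum_congr rfl hterm, Finset.sum_const, smul_eq_mul]
  congr 1
  have hBcard : B.card = Fintype.card (↥N ↪ ↥U) := by
    rw [← Fintype.card_subtype]
    apply Fintype.card_congr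
    exact {
      toFun := fun p => ⟨fun x => ⟨p.1 x, p.2 x⟩,
        fun a b h => p.1.injective (congrArg Subtype.val h)⟩
      invFun := fun q => ⟨q.trans (Function.Embedding.subtype _), fun x => (q x).2⟩
      left_inv := fun p => Subtype.ext (DFunLike.ext _ _ fun x => rfl)
      right_inv := fun q => DFunLike.ext _ _ fun x => rfl }
  rw [hBcard, Fintype.card_embedding_eq]
  simp

lemma sum_perm (k s n : ℕ) (hs : 0 < s) (hn : n = k * s) (N : Finset (Fin n)) :
    ∑ π : Equiv.Perm (Fin n), errSub (frcMatrix n s) (N.image (fun w => π w))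
    = (s : ℝ) * (k : ℝ)
      * (((n - s).descFactorial N.card * (n - N.card).factorial : ℕ) : ℝ) := by
  classical
  have step1 : ∀ π : Equiv.Perm (Fin n),
      errSub (frcMatrix n s) (N.image (fun w => π w))
      = ∑ b ∈ Finset.range k,
          (if ∀ w ∈ N, ((π w : ℕ)) / s ≠ b then (s:ℝ) else 0) := by
    intro π
    rw [errSub_eq k s n hs hn]
    have hpred : ((Finset.range k).filter
        (fun b => ∀ j ∈ N.image (fun w => π w), (j : ℕ) / s ≠ b))
        = ((Finset.range k).filter (fun b => ∀ w ∈ N, ((π w : ℕ)) / s ≠ b)) := by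
      apply Finset.filter_congr
      intro b _
      simp [Finset.mem_image]
    rw [hpred, Finset.card_filter]
    push_cast
    rw [Finset.mul_sum]
    apply Finset.sum_congr rfl
    intro b _
    split <;> simp
  rw [Finset.sum_congr rfl (fun π _ => step1 π), Finset.sum_comm]
  have step2 : ∀ b ∈ Finset.range k,
      (∑ π : Equiv.Perm (Fin n),
        (if ∀ w ∈ N, ((π w : ℕ)) / s ≠ b then (s:ℝ) else 0))
      = (s : ℝ) * (((n - s).descFactorial N.card * (n - N.card).factorial : ℕ) : ℝ) := by
    intro b hb
    rw [Finset.mem_range] at hb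
    set U : Finset (Fin n) :=
      Finset.univ.filter (fun j : Fin n => ¬ ((j : ℕ) / s = b)) with hU
    have hUcard : U.card = n - s := by
      rw [hU, Finset.filter_not, Finset.card_sdiff_of_subset (Finset.filter_subset _ _)]
      rw [block_card k s n hs hn hb]
      simp
    have hpred2 : ∀ π : Equiv.Perm (Fin n),
        (∀ w ∈ N, ((π w : ℕ)) / s ≠ b) ↔ (∀ w ∈ N, π w ∈ U) := by
      intro π
      constructor
      · intro h w hw
        rw [hU, Finset.mem_filter]
        exact ⟨Finset.mem_univ _, h w hw⟩
      · intro h w hw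
        have := h w hw
        rw [hU, Finset.mem_filter] at this
        exact this.2
    rw [Finset.sum_congr rfl (fun π _ => by rw [if_congr (hpred2 π) rfl rfl])]
    rw [← Finset.sum_filter, Finset.sum_const, nsmul_eq_mul]
    rw [perm_count n N U, hUcard]
    push_cast
    ring
  rw [Finset.sum_congr rfl step2, Finset.sum_const, Finset.card_range, nsmul_eq_mul]
  ring

lemma fiber_count {α : Type*} [Fintype α] [DecidableEq α] (i : ℕ) :
    (Finset.univ.filter (fun f : α → Bool =>
      (Finset.univ.filter (fun x => f x = false)).card = i)).card
    = (Fintype.card α).choose i := by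
  classical
  rw [show (Fintype.card α).choose i
      = (Finset.powersetCard i (Finset.univ : Finset α)).card by
    rw [Finset.card_powersetCard, Finset.card_univ]]
  apply Finset.card_nbij' (fun f => Finset.univ.filter (fun x => f x = false))
    (fun T x => decide (x ∉ T))
  · intro f hf
    simp only [Finset.mem_coe, Finset.mem_filter, Finset.mem_univ, true_and] at hf
    simpa [Finset.mem_powersetCard_univ] using hf
  · intro T hT
    simp only [Finset.mem_coe, Finset.mem_powersetCard_univ] at hT
    simp only [Finset.mem_coe, Finset.mem_filter, Finset.mem_univ, true_and]
    rw [← hT]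
    congr 1
    ext x
    simp
  · intro f hf
    funext x
    by_cases h : f x = false <;> simp [h]
  · intro T hT
    ext x
    simp

lemma bool_group {α : Type*} [Fintype α] [DecidableEq α] (p : ℝ) (φ : ℕ → ℝ) :
    ∑ f : α → Bool, (∏ i, if f i then p else 1 - p)
        * φ ((Finset.univ.filter (fun x => f x = false)).card)
    = ∑ i ∈ Finset.range (Fintype.card α + 1),
        ((Fintype.card α).choose i : ℝ) * (1-p)^i * p^(Fintype.card α - i) * φ i := by
  classical
  set c : (α → Bool) → ℕ := fun f => (Finset.univ.filter (fun x => f x = false)).card with hc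
  rw [← Finset.sum_fiberwise_of_maps_to (g := c) (t := Finset.range (Fintype.card α + 1))
    (fun f _ => by
      simp only [Finset.mem_range, Nat.lt_succ_iff, hc]
      exact (Finset.card_filter_le _ _).trans (by simp))]
  apply Finset.sum_congr rfl
  intro i hi
  simp only [Finset.mem_range, Nat.lt_succ_iff] at hi
  have hstep : ∀ f ∈ Finset.univ.filter (fun f : α → Bool => c f = i),
      (∏ x, if f x then p else 1 - p) * φ (c f)
      = (1-p)^i * p^(Fintype.card α - i) * φ i := by
    intro f hf
    simp only [Finset.mem_filter, Finset.mem_univ, true_and] at hf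
    have hprod : (∏ x, if f x then p else 1 - p)
        = p ^ (Finset.univ.filter (fun x => f x = true)).card
          * (1-p) ^ (Finset.univ.filter (fun x => ¬ f x = true)).card := by
      rw [Finset.prod_ite]
      simp
    have hfn : (Finset.univ.filter (fun x => ¬ f x = true)) 
        = (Finset.univ.filter (fun x => f x = false)) := by
      apply Finset.filter_congr; intro x _; simp
    have hpart := Finset.card_filter_add_card_filter_not
      (s := (Finset.univ : Finset α)) (p := fun x => f x = true)
    have hcount : (Finset.univ.filter (fun x => f x = true)).card = Fintype.card α - i := by
      rw [hfn] at hpart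
      have hf2 : (Finset.univ.filter (fun x => f x = false)).card = i := hf
      simp only [Finset.card_univ] at hpart
      omega
    have hf' : (Finset.univ.filter (fun x => f x = false)).card = i := hf
    rw [hprod, hfn, hcount, hf']
    have hcf : c f = i := hf
    rw [hcf]
    ring
  rw [Finset.sum_congr rfl hstep, Finset.sum_const, nsmul_eq_mul]
  have hfc : (Finset.univ.filter (fun f : α → Bool => c f = i)).card
      = (Fintype.card α).choose i := by
    rw [hc]; exact fiber_count i
  rw [hfc]
  ring

lemma card_lt_subtype (n m : ℕ) (hm : m ≤ n) :
    Fintype.card {x : Fin n // (x : ℕ) < m} = m := by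
  rw [Fintype.card_congr (α := {x : Fin n // (x:ℕ) < m}) (β := Fin m)
    ⟨fun x => ⟨x.1, x.2⟩, fun a => ⟨⟨a.1, lt_of_lt_of_le a.2 hm⟩, a.2⟩,
     fun x => by ext; rfl, fun a => by ext; rfl⟩]
  simp

lemma sum_omega (n m : ℕ) (hm : m ≤ n) (p_ss p_as : ℝ) (g : ℕ → ℝ) :
    ∑ ω : Fin n → Bool,
      (∏ i : Fin n, (if ω i then (if (i : ℕ) < m then p_ss else p_as)
          else 1 - (if (i : ℕ) < m then p_ss else p_as)))
        * g ((Finset.univ.filter (fun w : Fin n => ω w = false)).card)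
    = ∑ i ∈ Finset.range (m+1), ∑ j ∈ Finset.range (n-m+1),
        ((m.choose i : ℝ) * (1 - p_ss)^i * p_ss^(m-i))
        * (((n-m).choose j : ℝ) * (1 - p_as)^j * p_as^(n-m-j)) * g (i+j) := by
  classical
  set P : Fin n → Prop := fun i => (i : ℕ) < m with hP
  have cardP : Fintype.card {x : Fin n // P x} = m := card_lt_subtype n m hm
  have cardQ : Fintype.card {x : Fin n // ¬ P x} = n - m := by
    rw [Fintype.card_subtype_compl, cardP]; simp
  set e := Equiv.piEquivPiSubtypeProd P (fun _ => Bool) with he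
  rw [← Equiv.sum_comp e.symm, Fintype.sum_prod_type]
  have key : ∀ (f : {x : Fin n // P x} → Bool) (h : {x : Fin n // ¬ P x} → Bool),
      (∏ i : Fin n, (if (e.symm (f, h)) i then (if (i : ℕ) < m then p_ss else p_as)
          else 1 - (if (i : ℕ) < m then p_ss else p_as)))
        * g ((Finset.univ.filter (fun w : Fin n => (e.symm (f, h)) w = false)).card)
      = (∏ i, if f i then p_ss else 1 - p_ss)
          * ((∏ i, if h i then p_as else 1 - p_as)
            * g ((Finset.univ.filter (fun x => f x = false)).card
              + (Finset.univ.filter (fun x => h x = false)).card)) := by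
    intro f h
    have happ : ∀ x : Fin n, e.symm (f, h) x = if hx : P x then f ⟨x, hx⟩ else h ⟨x, hx⟩ :=
      fun x => Equiv.piEquivPiSubtypeProd_symm_apply P (fun _ => Bool) (f, h) x
    have hprod : (∏ i : Fin n, (if (e.symm (f, h)) i then (if (i : ℕ) < m then p_ss else p_as)
          else 1 - (if (i : ℕ) < m then p_ss else p_as)))
        = (∏ i, if f i then p_ss else 1 - p_ss) * (∏ i, if h i then p_as else 1 - p_as) := by
      rw [← Fintype.prod_subtype_mul_prod_subtype P
        (fun i : Fin n => (if (e.symm (f, h)) i then (if (i : ℕ) < m then p_ss else p_as)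
          else 1 - (if (i : ℕ) < m then p_ss else p_as)))]
      congr 1
      · apply Finset.prod_congr rfl
        intro i _
        rw [happ i, dif_pos i.2, if_pos i.2, Subtype.coe_eta]
      · apply Finset.prod_congr rfl
        intro i _
        rw [happ i, dif_neg i.2, if_neg i.2, Subtype.coe_eta]
    have hcount : (Finset.univ.filter (fun w : Fin n => (e.symm (f, h)) w = false)).card
        = (Finset.univ.filter (fun x => f x = false)).card
          + (Finset.univ.filter (fun x => h x = false)).card := by
      rw [Finset.card_filter, ← Fintype.sum_subtype_add_sum_subtype P
        (fun w : Fin n => if (e.symm (f, h)) w = false then 1 else 0),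
        Finset.card_filter, Finset.card_filter]
      congr 1
      · apply Finset.sum_congr rfl
        intro i _
        rw [happ i, dif_pos i.2, Subtype.coe_eta]
      · apply Finset.sum_congr rfl
        intro i _
        rw [happ i, dif_neg i.2, Subtype.coe_eta]
    rw [hprod, hcount, mul_assoc]
  rw [Finset.sum_congr rfl (fun f _ => Finset.sum_congr rfl (fun h _ => key f h))]
  have inner : ∀ f : {x : Fin n // P x} → Bool,
      ∑ h : {x : Fin n // ¬ P x} → Bool, (∏ i, if h i then p_as else 1 - p_as)
        * g ((Finset.univ.filter (fun x => f x = false)).card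
            + (Finset.univ.filter (fun x => h x = false)).card)
      = ∑ j ∈ Finset.range (n-m+1), ((n-m).choose j : ℝ) * (1 - p_as)^j * p_as^(n-m-j)
          * g ((Finset.univ.filter (fun x => f x = false)).card + j) := by
    intro f
    have := bool_group (α := {x : Fin n // ¬ P x}) p_as
      (fun t => g ((Finset.univ.filter (fun x => f x = false)).card + t))
    rw [cardQ] at this
    exact this
  calc ∑ f : {x : Fin n // P x} → Bool, ∑ h : {x : Fin n // ¬ P x} → Bool,
        (∏ i, if f i then p_ss else 1 - p_ss)
          * ((∏ i, if h i then p_as else 1 - p_as)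
            * g ((Finset.univ.filter (fun x => f x = false)).card
              + (Finset.univ.filter (fun x => h x = false)).card))
      = ∑ f : {x : Fin n // P x} → Bool, (∏ i, if f i then p_ss else 1 - p_ss)
          * ∑ j ∈ Finset.range (n-m+1), ((n-m).choose j : ℝ) * (1 - p_as)^j * p_as^(n-m-j)
            * g ((Finset.univ.filter (fun x => f x = false)).card + j) := by
        apply Finset.sum_congr rfl
        intro f _
        rw [← Finset.mul_sum, inner f]
    _ = ∑ j ∈ Finset.range (n-m+1), (((n-m).choose j : ℝ) * (1 - p_as)^j * p_as^(n-m-j))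
          * ∑ f : {x : Fin n // P x} → Bool, (∏ i, if f i then p_ss else 1 - p_ss)
            * g ((Finset.univ.filter (fun x => f x = false)).card + j) := by
        rw [Finset.sum_congr rfl (fun f _ => Finset.mul_sum _ _ _), Finset.sum_comm]
        apply Finset.sum_congr rfl
        intro j _
        rw [Finset.mul_sum]
        apply Finset.sum_congr rfl
        intro f _
        ring
    _ = ∑ j ∈ Finset.range (n-m+1), (((n-m).choose j : ℝ) * (1 - p_as)^j * p_as^(n-m-j))
          * ∑ i ∈ Finset.range (m+1), (m.choose i : ℝ) * (1 - p_ss)^i * p_ss^(m-i) * g (i + j) := by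
        apply Finset.sum_congr rfl
        intro j _
        congr 1
        have := bool_group (α := {x : Fin n // P x}) p_ss (fun t => g (t + j))
        rw [cardP] at this
        exact this
    _ = ∑ i ∈ Finset.range (m+1), ∑ j ∈ Finset.range (n-m+1),
        ((m.choose i : ℝ) * (1 - p_ss)^i * p_ss^(m-i))
        * (((n-m).choose j : ℝ) * (1 - p_as)^j * p_as^(n-m-j)) * g (i+j) := by
        rw [Finset.sum_congr rfl (fun j _ => Finset.mul_sum _ _ _), Finset.sum_comm]
        apply Finset.sum_congr rfl
        intro i _
        apply Finset.sum_congr rfl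
        intro j _
        ring

lemma geval (k s n : ℕ) (hs : 0 < s) (hn : n = k * s) {r : ℕ} (hr : r ≤ n) :
    (n.factorial : ℝ)⁻¹ * ((s : ℝ) * (k : ℝ)
        * (((n - s).descFactorial r * (n - r).factorial : ℕ) : ℝ))
    = (n : ℝ) * ((n - s).choose r : ℝ) / (n.choose r : ℝ) := by
  have h2 := Nat.choose_mul_factorial_mul_factorial hr
  have hnfac : (n.factorial : ℝ)
      = (n.choose r : ℝ) * (r.factorial : ℝ) * ((n - r).factorial : ℝ) := by
    exact_mod_cast h2.symm
  have hsk : (s : ℝ) * (k : ℝ) = (n : ℝ) := by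
    rw [hn]; push_cast; ring
  have hc0 : (n.choose r : ℝ) ≠ 0 := by
    exact_mod_cast (Nat.choose_pos hr).ne'
  have hf1 : (r.factorial : ℝ) ≠ 0 := by exact_mod_cast r.factorial_ne_zero
  have hf2 : ((n - r).factorial : ℝ) ≠ 0 := by exact_mod_cast (n - r).factorial_ne_zero
  rw [Nat.descFactorial_eq_factorial_mul_choose, hnfac, hsk]
  push_cast
  field_simp

lemma reindex (k s n m : ℕ) (hs : 0 < s) (hn : n = k * s) (hm : m ≤ n) (p_ss p_as : ℝ) :
    ∑ i ∈ Finset.range (m+1), ∑ j ∈ Finset.range (n-m+1),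
        ((m.choose i : ℝ) * (1 - p_ss)^i * p_ss^(m-i))
        * (((n-m).choose j : ℝ) * (1 - p_as)^j * p_as^(n-m-j))
        * ((n.factorial : ℝ)⁻¹ * ((s : ℝ) * (k : ℝ)
            * (((n - s).descFactorial (i+j) * (n - (i+j)).factorial : ℕ) : ℝ)))
    = (n : ℝ) * ∑ r ∈ Finset.range (n - s + 1),
        (∑ i ∈ Finset.range (r + 1),
          (m.choose i : ℝ) * ((n - m).choose (r - i) : ℝ) *
            (1 - p_ss) ^ i * p_ss ^ (m - i) *
            (1 - p_as) ^ (r - i) * p_as ^ (n - m - (r - i))) *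
        ((n - s).choose r : ℝ) / (n.choose r : ℝ) := by
  classical
  set H : ℕ × ℕ → ℝ := fun p =>
    (m.choose p.1 : ℝ) * ((n-m).choose p.2 : ℝ) * (1-p_ss)^p.1 * p_ss^(m-p.1)
      * (1-p_as)^p.2 * p_as^(n-m-p.2)
      * ((n : ℝ) * ((n-s).choose (p.1+p.2) : ℝ) / ((n.choose (p.1+p.2) : ℝ))) with hH
  have hzero1 : ∀ p : ℕ × ℕ, m < p.1 → H p = 0 := by
    intro p hp
    rw [hH]; simp [Nat.choose_eq_zero_of_lt hp]
  have hzero2 : ∀ p : ℕ × ℕ, n - m < p.2 → H p = 0 := by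
    intro p hp
    rw [hH]; simp [Nat.choose_eq_zero_of_lt hp]
  -- LHS = sum of H over the full product
  have hL : ∑ i ∈ Finset.range (m+1), ∑ j ∈ Finset.range (n-m+1),
        ((m.choose i : ℝ) * (1 - p_ss)^i * p_ss^(m-i))
        * (((n-m).choose j : ℝ) * (1 - p_as)^j * p_as^(n-m-j))
        * ((n.factorial : ℝ)⁻¹ * ((s : ℝ) * (k : ℝ)
            * (((n - s).descFactorial (i+j) * (n - (i+j)).factorial : ℕ) : ℝ)))
      = ∑ p ∈ Finset.range (m+1) ×ˢ Finset.range (n-m+1), H p := by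
    rw [Finset.sum_product]
    apply Finset.sum_congr rfl
    intro i hi
    apply Finset.sum_congr rfl
    intro j hj
    simp only [Finset.mem_range, Nat.lt_succ_iff] at hi hj
    have hij : i + j ≤ n := by omega
    rw [geval k s n hs hn hij, hH]
    ring
  rw [hL]
  -- RHS = sum over range(n-s+1) sigma
  have hR : (n : ℝ) * ∑ r ∈ Finset.range (n - s + 1),
        (∑ i ∈ Finset.range (r + 1),
          (m.choose i : ℝ) * ((n - m).choose (r - i) : ℝ) *
            (1 - p_ss) ^ i * p_ss ^ (m - i) *
            (1 - p_as) ^ (r - i) * p_as ^ (n - m - (r - i))) *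
        ((n - s).choose r : ℝ) / (n.choose r : ℝ)
      = ∑ r ∈ Finset.range (n - s + 1), ∑ i ∈ Finset.range (r + 1), H (i, r - i) := by
    rw [Finset.mul_sum]
    apply Finset.sum_congr rfl
    intro r hr
    simp only [Finset.mem_range, Nat.lt_succ_iff] at hr
    rw [div_eq_mul_inv, Finset.sum_mul, Finset.sum_mul, Finset.mul_sum]
    apply Finset.sum_congr rfl
    intro i hi
    simp only [Finset.mem_range, Nat.lt_succ_iff] at hi
    have hir : i + (r - i) = r := by omega
    rw [hH]
    simp only []
    rw [hir, div_eq_mul_inv]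
    ring
  rw [hR]
  -- now the chain of set transformations
  have E1 : ∑ r ∈ Finset.range (n - s + 1), ∑ i ∈ Finset.range (r + 1), H (i, r - i)
      = ∑ r ∈ Finset.range (n + 1), ∑ i ∈ Finset.range (r + 1), H (i, r - i) := by
    apply Finset.sum_subset (Finset.range_subset_range.2 (by omega))
    intro r _ hr
    simp only [Finset.mem_range, Nat.lt_succ_iff, not_le] at hr
    apply Finset.sum_eq_zero
    intro i hi
    simp only [Finset.mem_range, Nat.lt_succ_iff] at hi
    have hir : i + (r - i) = r := by omega
    rw [hH]
    simp only []
    rw [hir, Nat.choose_eq_zero_of_lt hr]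
    simp
  have E2 : ∑ r ∈ Finset.range (n + 1), ∑ i ∈ Finset.range (r + 1), H (i, r - i)
      = ∑ p ∈ (Finset.range (n+1) ×ˢ Finset.range (n+1)).filter
          (fun p => p.1 + p.2 ≤ n), H p := by
    rw [Finset.sum_sigma']
    apply Finset.sum_nbij' (i := fun x => (x.2, x.1 - x.2)) (j := fun p => ⟨p.1 + p.2, p.1⟩)
    · intro x hx
      simp only [Finset.mem_sigma, Finset.mem_range, Nat.lt_succ_iff] at hx
      simp only [Finset.mem_filter, Finset.mem_product, Finset.mem_range, Nat.lt_succ_iff]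
      omega
    · intro p hp
      simp only [Finset.mem_filter, Finset.mem_product, Finset.mem_range, Nat.lt_succ_iff] at hp
      simp only [Finset.mem_sigma, Finset.mem_range, Nat.lt_succ_iff]
      omega
    · intro x hx
      simp only [Finset.mem_sigma, Finset.mem_range, Nat.lt_succ_iff] at hx
      have : x.2 + (x.1 - x.2) = x.1 := by omega
      rw [Sigma.ext_iff]
      simp [this]
    · intro p hp
      simp
    · intro x hx
      rfl
  have E3 : ∑ p ∈ (Finset.range (n+1) ×ˢ Finset.range (n+1)).filter
        (fun p => p.1 + p.2 ≤ n), H p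
      = ∑ p ∈ Finset.range (n+1) ×ˢ Finset.range (n+1), H p := by
    apply Finset.sum_subset (Finset.filter_subset _ _)
    intro p hp hp2
    simp only [Finset.mem_filter, Finset.mem_product, Finset.mem_range, Nat.lt_succ_iff,
      not_and, not_le] at hp hp2
    have : m < p.1 ∨ n - m < p.2 := by omega
    rcases this with h | h
    · exact hzero1 p h
    · exact hzero2 p h
  have E4 : ∑ p ∈ Finset.range (m+1) ×ˢ Finset.range (n-m+1), H p
      = ∑ p ∈ Finset.range (n+1) ×ˢ Finset.range (n+1), H p := by
    apply Finset.sum_subset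
      (Finset.product_subset_product (Finset.range_subset_range.2 (by omega))
        (Finset.range_subset_range.2 (by omega)))
    intro p hp hp2
    simp only [Finset.mem_product, Finset.mem_range, Nat.lt_succ_iff, not_and, not_le] at hp hp2
    have : m < p.1 ∨ n - m < p.2 := by omega
    rcases this with h | h
    · exact hzero1 p h
    · exact hzero2 p h
  rw [E1, E2, E3, E4]


/-!
STATEMENT 4 (Theorem 1: expected decoding error of FRC with shuffling).
`n = k·s` workers; the `m` workers with index `< m` are slow and straggle
independently with probability `p_ss`, the other `n − m` are active and
straggle independently with probability `p_as` (`ω w = true` means worker `w`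
straggles).  Independently, a uniformly random permutation `π` shuffles the
columns of the FRC encoding matrix among the workers (worker `w` holds column
`π w`).  `S = π '' {non-stragglers}` is the random set of columns held by the
non-straggling workers.  Then
`E[err(A_S)] = n · Σ_{r=0}^{n−s} P_r · C(n−s,r)/C(n,r)` with `P_r` as in the
(n,m)-heterogeneous model.
-/
theorem frc_expected_error_heterogeneous_shuffling
    (k s n m : ℕ) (hk : 0 < k) (hs : 0 < s) (hn : n = k * s) (hm : m ≤ n)
    (p_ss p_as : ℝ)
    (hss0 : 0 ≤ p_ss) (hss1 : p_ss ≤ 1) (has0 : 0 ≤ p_as) (has1 : p_as ≤ 1) :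
    ∑ π : Equiv.Perm (Fin n), ∑ ω : Fin n → Bool,
      ((n.factorial : ℝ)⁻¹ *
        ∏ i : Fin n,
          (if ω i then (if (i : ℕ) < m then p_ss else p_as)
           else 1 - (if (i : ℕ) < m then p_ss else p_as))) *
      errSub (frcMatrix n s)
        ((Finset.univ.filter (fun w : Fin n => ω w = false)).image
          (fun w => π w))
    = (n : ℝ) * ∑ r ∈ Finset.range (n - s + 1),
        (∑ i ∈ Finset.range (r + 1),
          (m.choose i : ℝ) * ((n - m).choose (r - i) : ℝ) *
            (1 - p_ss) ^ i * p_ss ^ (m - i) *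
            (1 - p_as) ^ (r - i) * p_as ^ (n - m - (r - i))) *
        ((n - s).choose r : ℝ) / (n.choose r : ℝ) := by
  classical
  set g : ℕ → ℝ := fun r => (n.factorial : ℝ)⁻¹ * ((s : ℝ) * (k : ℝ)
      * (((n - s).descFactorial r * (n - r).factorial : ℕ) : ℝ)) with hg
  have hmain : (∑ π : Equiv.Perm (Fin n), ∑ ω : Fin n → Bool,
      ((n.factorial : ℝ)⁻¹ *
        ∏ i : Fin n,
          (if ω i then (if (i : ℕ) < m then p_ss else p_as)
           else 1 - (if (i : ℕ) < m then p_ss else p_as))) *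
      errSub (frcMatrix n s)
        ((Finset.univ.filter (fun w : Fin n => ω w = false)).image
          (fun w => π w)))
      = ∑ ω : Fin n → Bool,
        (∏ i : Fin n, (if ω i then (if (i : ℕ) < m then p_ss else p_as)
            else 1 - (if (i : ℕ) < m then p_ss else p_as)))
          * g ((Finset.univ.filter (fun w : Fin n => ω w = false)).card) := by
    rw [Finset.sum_comm]
    apply Finset.sum_congr rfl
    intro ω _
    rw [← Finset.mul_sum,
      sum_perm k s n hs hn (Finset.univ.filter (fun w : Fin n => ω w = false)), hg]
    ring
  rw [hmain]
  calc ∑ ω : Fin n → Bool,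
        (∏ i : Fin n, (if ω i then (if (i : ℕ) < m then p_ss else p_as)
            else 1 - (if (i : ℕ) < m then p_ss else p_as)))
          * g ((Finset.univ.filter (fun w : Fin n => ω w = false)).card)
      = ∑ i ∈ Finset.range (m+1), ∑ j ∈ Finset.range (n-m+1),
        ((m.choose i : ℝ) * (1 - p_ss)^i * p_ss^(m-i))
        * (((n-m).choose j : ℝ) * (1 - p_as)^j * p_as^(n-m-j)) * g (i+j) :=
      sum_omega n m hm p_ss p_as g
    _ = (n : ℝ) * ∑ r ∈ Finset.range (n - s + 1),
        (∑ i ∈ Finset.range (r + 1),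
          (m.choose i : ℝ) * ((n - m).choose (r - i) : ℝ) *
            (1 - p_ss) ^ i * p_ss ^ (m - i) *
            (1 - p_as) ^ (r - i) * p_as ^ (n - m - (r - i))) *
        ((n - s).choose r : ℝ) / (n.choose r : ℝ) := reindex k s n m hs hn hm p_ss p_as
end

section
/- Let n ≥ 1 and let σ be the cyclic-shift map on the set {0,1}^n (equivalently 𝔽₂ⁿ) of binary vectors of length n. For r ∈ {0,…,n} and a divisor e of n, let N(r,e) be the number of orbits of the cyclic group ⟨σ⟩ acting on {0,1}^n that have cardinality exactly e and consist of vectors of Hamming weight r. Then N(r,e) equals the coefficient of x^r in the polynomial R_e(x) = (1/e) · Σ_{d | e} μ(e/d) · (1 + x^{n/d})^d, where μ is the Möbius function. -/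
open Polynomial

/-- The cyclic shift by one position: `σ(v)_j = v_{j−1}` (indices mod `n`). -/
def cycShift (n : ℕ) [NeZero n] (v : Fin n → Bool) : Fin n → Bool :=
  fun j => v (j - 1)

/-- Hamming weight of `v ∈ {0,1}^n`. -/
def hWeight {n : ℕ} (v : Fin n → Bool) : ℕ :=
  (Finset.univ.filter (fun j => v j = true)).card

/-- The cycle class (orbit under the cyclic-shift action) of `v`. -/
def cycOrbit (n : ℕ) [NeZero n] (v : Fin n → Bool) : Finset (Fin n → Bool) :=
  (Finset.range n).image (fun k => (cycShift n)^[k] v)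

/-- `N(r,e)`: the number of distinct cycle classes (orbits of the cyclic-shift
action on `{0,1}^n`) of Hamming weight `r` and order (cardinality) `e`. -/
def numCycleClasses (n : ℕ) [NeZero n] (r e : ℕ) : ℕ :=
  (Finset.image (cycOrbit n)
    (Finset.univ.filter
      (fun v : Fin n → Bool => hWeight v = r ∧ (cycOrbit n v).card = e))).card

section Aux

open Fin.NatCast

variable (n : ℕ) [NeZero n]

lemma cyc_iter (k : ℕ) (v : Fin n → Bool) (j : Fin n) :
    (cycShift n)^[k] v j = v (j - (k : Fin n)) := by
  induction k generalizing j with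
  | zero => simp
  | succ k ih =>
    rw [Function.iterate_succ_apply']
    show (cycShift n)^[k] v (j - 1) = _
    rw [ih]
    congr 1
    push_cast
    abel

lemma cyc_iter_n (v : Fin n → Bool) : (cycShift n)^[n] v = v := by
  funext j
  rw [cyc_iter]
  simp

lemma cycShift_injective : Function.Injective (cycShift n) := by
  intro v w h
  funext j
  have := congrFun h (j + 1)
  simpa [cycShift] using this

lemma cyc_iter_injective (k : ℕ) : Function.Injective ((cycShift n)^[k]) :=
  Function.Injective.iterate (cycShift_injective n) k

lemma per_exists (v : Fin n → Bool) : ∃ p, 0 < p ∧ (cycShift n)^[p] v = v :=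
  ⟨n, Nat.pos_of_ne_zero (NeZero.ne n), cyc_iter_n n v⟩

noncomputable def per (v : Fin n → Bool) : ℕ := Nat.find (per_exists n v)

lemma per_pos (v : Fin n → Bool) : 0 < per n v := (Nat.find_spec (per_exists n v)).1

lemma per_iter (v : Fin n → Bool) : (cycShift n)^[per n v] v = v :=
  (Nat.find_spec (per_exists n v)).2

lemma iter_mul_per (v : Fin n → Bool) (q : ℕ) : (cycShift n)^[per n v * q] v = v := by
  induction q with
  | zero => simp
  | succ q ih =>
    rw [Nat.mul_succ, Function.iterate_add_apply, per_iter, ih]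

lemma per_dvd_iff (v : Fin n → Bool) (k : ℕ) :
    (cycShift n)^[k] v = v ↔ per n v ∣ k := by
  constructor
  · intro h
    by_contra hnd
    have hmod : k % per n v ≠ 0 := fun h0 => hnd (Nat.dvd_of_mod_eq_zero h0)
    have hk : (cycShift n)^[k % per n v] v = v := by
      conv_rhs => rw [← h]
      conv_rhs => rw [← Nat.mod_add_div k (per n v)]
      rw [Function.iterate_add_apply, iter_mul_per]
    exact absurd (Nat.find_le ⟨Nat.pos_of_ne_zero hmod, hk⟩)
      (not_le.mpr (Nat.mod_lt _ (per_pos n v)))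
  · rintro ⟨q, rfl⟩
    exact iter_mul_per n v q

lemma per_dvd_n (v : Fin n → Bool) : per n v ∣ n :=
  (per_dvd_iff n v n).mp (cyc_iter_n n v)

lemma iter_mod_per (v : Fin n → Bool) (k : ℕ) :
    (cycShift n)^[k] v = (cycShift n)^[k % per n v] v := by
  conv_lhs => rw [← Nat.mod_add_div k (per n v)]
  rw [Function.iterate_add_apply]
  congr 1
  exact (per_dvd_iff n v _).mpr (Dvd.intro _ rfl)

lemma cycOrbit_card (v : Fin n → Bool) : (cycOrbit n v).card = per n v := by
  have hple : per n v ≤ n := Nat.le_of_dvd (Nat.pos_of_ne_zero (NeZero.ne n)) (per_dvd_n n v)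
  have himg : cycOrbit n v = (Finset.range (per n v)).image (fun k => (cycShift n)^[k] v) := by
    apply Finset.Subset.antisymm
    · intro w hw
      rw [cycOrbit, Finset.mem_image] at hw
      obtain ⟨k, _, rfl⟩ := hw
      exact Finset.mem_image.mpr ⟨k % per n v,
        Finset.mem_range.mpr (Nat.mod_lt _ (per_pos n v)), (iter_mod_per n v k).symm⟩
    · exact Finset.image_subset_image (Finset.range_subset_range.mpr hple)
  rw [himg, Finset.card_image_of_injOn, Finset.card_range]
  have key : ∀ a b : ℕ, a < per n v → b < per n v → a ≤ b →
      (cycShift n)^[a] v = (cycShift n)^[b] v → a = b := by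
    intro a b ha hb h hab
    have h1 : (cycShift n)^[a + (b - a)] v = (cycShift n)^[a] v := by
      rw [Nat.add_sub_cancel' h]; exact hab.symm
    rw [Function.iterate_add_apply] at h1
    have h2 : (cycShift n)^[b - a] v = v := cyc_iter_injective n a h1
    have h3 := (per_dvd_iff n v _).mp h2
    have := Nat.eq_zero_of_dvd_of_lt h3 (by omega)
    omega
  intro a ha b hb hab
  simp only [Finset.coe_range, Set.mem_Iio] at ha hb
  have hab' : (cycShift n)^[a] v = (cycShift n)^[b] v := hab
  rcases le_total a b with h | h
  · exact key a b ha hb h hab'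
  · exact (key b a hb ha h hab'.symm).symm

lemma hWeight_shift (v : Fin n → Bool) : hWeight (cycShift n v) = hWeight v := by
  unfold hWeight cycShift
  apply Finset.card_nbij (fun j => j - 1) (fun j hj => by simpa using hj) ?_ ?_
  · intro a ha b hb hab
    have h2 := congrArg (· + 1) hab
    simpa [sub_add_cancel] using h2
  · intro b hb
    refine ⟨b + 1, by simpa using hb, by simp⟩

lemma hWeight_iter (v : Fin n → Bool) (k : ℕ) : hWeight ((cycShift n)^[k] v) = hWeight v := by
  induction k with
  | zero => simp
  | succ k ih => rw [Function.iterate_succ_apply', hWeight_shift, ih]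

lemma mem_cycOrbit_iff (v w : Fin n → Bool) :
    w ∈ cycOrbit n v ↔ ∃ k < n, (cycShift n)^[k] v = w := by
  simp [cycOrbit, Finset.mem_image, Finset.mem_range]

lemma self_mem_cycOrbit (v : Fin n → Bool) : v ∈ cycOrbit n v :=
  (mem_cycOrbit_iff n v v).mpr ⟨0, Nat.pos_of_ne_zero (NeZero.ne n), rfl⟩

lemma cycOrbit_shift (v : Fin n → Bool) : cycOrbit n (cycShift n v) = cycOrbit n v := by
  have hn : 0 < n := Nat.pos_of_ne_zero (NeZero.ne n)
  ext w
  rw [mem_cycOrbit_iff, mem_cycOrbit_iff]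
  constructor
  · rintro ⟨k, hk, rfl⟩
    rw [← Function.iterate_succ_apply]
    rcases Nat.lt_or_ge (k+1) n with h | h
    · exact ⟨k+1, h, rfl⟩
    · have : k + 1 = n := by omega
      refine ⟨0, hn, ?_⟩
      show v = (cycShift n)^[k+1] v
      rw [this, cyc_iter_n]
  · rintro ⟨k, hk, rfl⟩
    rcases Nat.eq_zero_or_pos k with rfl | hk0
    · refine ⟨n - 1, by omega, ?_⟩
      show (cycShift n)^[n-1] (cycShift n v) = v
      rw [← Function.iterate_succ_apply, Nat.succ_eq_add_one, Nat.sub_add_cancel hn, cyc_iter_n]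
    · exact ⟨k - 1, by omega, by rw [← Function.iterate_succ_apply]; congr 1; omega⟩

lemma cycOrbit_iter (v : Fin n → Bool) (k : ℕ) :
    cycOrbit n ((cycShift n)^[k] v) = cycOrbit n v := by
  induction k with
  | zero => rfl
  | succ k ih => rw [Function.iterate_succ_apply', cycOrbit_shift, ih]

lemma T_card (r e : ℕ) :
    (Finset.univ.filter
      (fun v : Fin n → Bool => hWeight v = r ∧ (cycOrbit n v).card = e)).card
    = numCycleClasses n r e * e := by
  set T := Finset.univ.filter
      (fun v : Fin n → Bool => hWeight v = r ∧ (cycOrbit n v).card = e) with hT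
  have hmap : ∀ v ∈ T, cycOrbit n v ∈ T.image (cycOrbit n) :=
    fun v hv => Finset.mem_image_of_mem _ hv
  rw [Finset.card_eq_sum_card_fiberwise hmap]
  rw [numCycleClasses, ← hT]
  rw [Finset.sum_congr rfl (fun O hO => ?_), Finset.sum_const, smul_eq_mul]
  obtain ⟨v, hvT, rfl⟩ := Finset.mem_image.mp hO
  have hv := Finset.mem_filter.mp hvT
  have hfib : T.filter (fun w => cycOrbit n w = cycOrbit n v) = cycOrbit n v := by
    ext w
    constructor
    · intro hw
      have h2 := (Finset.mem_filter.mp hw).2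
      rw [← h2]
      exact self_mem_cycOrbit n w
    · intro hw
      obtain ⟨k, hk, rfl⟩ := (mem_cycOrbit_iff n v w).mp hw
      refine Finset.mem_filter.mpr ⟨Finset.mem_filter.mpr ⟨Finset.mem_univ _, ?_, ?_⟩, ?_⟩
      · rw [hWeight_iter]; exact hv.2.1
      · rw [cycOrbit_iter]; exact hv.2.2
      · exact cycOrbit_iter n v k
  rw [hfib]
  exact hv.2.2

lemma sub_d_val_mod {d : ℕ} (hd : d ∣ n) (hd0 : 0 < d) (j : Fin n) :
    (j - (d : Fin n)).val % d = j.val % d := by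
  have hn : 0 < n := Nat.pos_of_ne_zero (NeZero.ne n)
  rw [Fin.sub_def]
  rw [Nat.mod_mod_of_dvd _ hd]
  have hdn : (d : Fin n).val = d % n := Fin.val_natCast d n
  rw [hdn]
  have hle : d ≤ n := Nat.le_of_dvd hn hd
  have h1 : d ∣ (n - d % n) := by
    rcases Nat.lt_or_ge d n with h | h
    · rw [Nat.mod_eq_of_lt h]
      exact Nat.dvd_sub hd (dvd_refl d)
    · have hdn' : d = n := le_antisymm hle h
      subst hdn'
      simp
  obtain ⟨c, hc⟩ := h1
  rw [hc, Nat.mul_add_mod]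

lemma iter_d_eq_iff (d : ℕ) (v : Fin n → Bool) :
    (cycShift n)^[d] v = v ↔ ∀ j, v (j - (d : Fin n)) = v j := by
  constructor
  · intro h j
    conv_rhs => rw [← h]
    rw [cyc_iter]
  · intro h
    funext j
    rw [cyc_iter]
    exact h j

lemma eq_psi {d : ℕ} (hd : d ∣ n) (hd0 : 0 < d) (v : Fin n → Bool)
    (h : (cycShift n)^[d] v = v) (j : Fin n) :
    v j = v ⟨j.val % d, lt_of_lt_of_le (Nat.mod_lt _ hd0)
      (Nat.le_of_dvd (Nat.pos_of_ne_zero (NeZero.ne n)) hd)⟩ := by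
  have hn : 0 < n := Nat.pos_of_ne_zero (NeZero.ne n)
  have hle : d ≤ n := Nat.le_of_dvd hn hd
  have hper := (iter_d_eq_iff n d v).mp h
  have key : ∀ a (j : Fin n), j.val = a → v j = v ⟨j.val % d,
      lt_of_lt_of_le (Nat.mod_lt _ hd0) hle⟩ := by
    intro a
    induction a using Nat.strong_induction_on with
    | _ a ih =>
      intro j hj
      rcases Nat.lt_or_ge j.val d with hlt | hge
      · congr 1
        exact Fin.ext (Nat.mod_eq_of_lt hlt).symm
      · have hdn : d < n := lt_of_le_of_lt hge j.isLt
        set j' := j - (d : Fin n) with hj'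
        have hdval : ((d : ℕ) : Fin n).val = d := by
          rw [Fin.val_natCast, Nat.mod_eq_of_lt hdn]
        have hval : j'.val = j.val - d := by
          rw [hj', Fin.coe_sub_iff_le.mpr (by rw [Fin.le_def, hdval]; exact hge), hdval]
        have h1 : v j = v j' := (hper j).symm
        have h2 := ih (j.val - d) (by omega) j' (by omega)
        rw [h1, h2]
        congr 1
        exact Fin.ext (sub_d_val_mod n hd hd0 j)
  exact key j.val j rfl

lemma card_residue {d : ℕ} (hd : d ∣ n) (hd0 : 0 < d) (i : Fin d) :
    (Finset.univ.filter fun j : Fin n => j.val % d = i.val).card = n / d := by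
  have hn : 0 < n := Nat.pos_of_ne_zero (NeZero.ne n)
  rw [← Finset.card_range (n / d)]
  apply Finset.card_bij (fun j _ => j.val / d)
  · intro a ha
    simp only [Finset.mem_filter, Finset.mem_univ, true_and] at ha
    exact Finset.mem_range.mpr (Nat.div_lt_div_of_lt_of_dvd hd a.isLt)
  · intro a₁ h₁ a₂ h₂ heq
    simp only [Finset.mem_filter, Finset.mem_univ, true_and] at h₁ h₂
    apply Fin.ext
    calc a₁.val = d * (a₁.val / d) + a₁.val % d := (Nat.div_add_mod _ _).symm
      _ = d * (a₂.val / d) + a₂.val % d := by rw [heq, h₁, h₂]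
      _ = a₂.val := Nat.div_add_mod _ _
  · intro q hq
    have hq' := Finset.mem_range.mp hq
    have hbound : d * q + i.val < n := by
      have h1 : d * q + i.val < d * (q + 1) := by
        rw [Nat.mul_add, Nat.mul_one]
        omega
      have h2 : d * (q + 1) ≤ d * (n / d) := Nat.mul_le_mul_left d (by omega)
      rw [Nat.mul_div_cancel' hd] at h2
      omega
    refine ⟨⟨d * q + i.val, hbound⟩, Finset.mem_filter.mpr ⟨Finset.mem_univ _, ?_⟩, ?_⟩
    · simp [Nat.mul_add_mod, Nat.mod_eq_of_lt i.isLt]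
    · simp [Nat.mul_add_div hd0, Nat.div_eq_of_lt i.isLt]

lemma hWeight_periodic {d : ℕ} (hd : d ∣ n) (hd0 : 0 < d) (v : Fin n → Bool)
    (h : (cycShift n)^[d] v = v) :
    hWeight v = (n / d) * hWeight (fun i : Fin d =>
      v ⟨i.val, lt_of_lt_of_le i.isLt (Nat.le_of_dvd (Nat.pos_of_ne_zero (NeZero.ne n)) hd)⟩) := by
  have hn : 0 < n := Nat.pos_of_ne_zero (NeZero.ne n)
  have hle : d ≤ n := Nat.le_of_dvd hn hd
  set w : Fin d → Bool := fun i =>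
      v ⟨i.val, lt_of_lt_of_le i.isLt hle⟩ with hw
  have hkey : ∀ j : Fin n, v j = w ⟨j.val % d, Nat.mod_lt _ hd0⟩ := fun j => eq_psi n hd hd0 v h j
  unfold hWeight
  rw [Finset.card_eq_sum_card_fiberwise
    (f := fun j : Fin n => (⟨j.val % d, Nat.mod_lt _ hd0⟩ : Fin d))
    (t := Finset.univ) (fun _ _ => Finset.mem_univ _)]
  have hfib : ∀ i : Fin d,
      ((Finset.univ.filter (fun j : Fin n => v j = true)).filter
        (fun j => (⟨j.val % d, Nat.mod_lt _ hd0⟩ : Fin d) = i)).card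
      = if w i = true then n / d else 0 := by
    intro i
    rw [Finset.filter_filter]
    by_cases hwi : w i = true
    · rw [if_pos hwi, ← card_residue n hd hd0 i]
      congr 1
      ext j
      simp only [Finset.mem_filter, Finset.mem_univ, true_and]
      constructor
      · rintro ⟨_, h2⟩
        exact congrArg Fin.val h2
      · intro h2
        have : (⟨j.val % d, Nat.mod_lt _ hd0⟩ : Fin d) = i := Fin.ext h2
        refine ⟨?_, this⟩
        rw [hkey j, this, hwi]
    · rw [if_neg hwi, Finset.card_eq_zero]
      ext j
      simp only [Finset.mem_filter, Finset.mem_univ, true_and, Finset.notMem_empty,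
        iff_false, not_and]
      intro hvj h2
      exact hwi (by rw [← h2, ← hkey j, hvj])
  rw [Finset.sum_congr rfl (fun i _ => hfib i), ← Finset.sum_filter, Finset.sum_const,
    smul_eq_mul]
  rw [mul_comm]

lemma weight_count (d s : ℕ) :
    (Finset.univ.filter (fun w : Fin d → Bool => hWeight w = s)).card = d.choose s := by
  have h1 : (Finset.powersetCard s (Finset.univ : Finset (Fin d))).card = d.choose s := by
    rw [Finset.card_powersetCard, Finset.card_univ, Fintype.card_fin]
  rw [← h1]
  apply Finset.card_bij (fun w _ => Finset.univ.filter (fun i => w i = true))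
  · intro w hw
    rw [Finset.mem_powersetCard]
    exact ⟨Finset.subset_univ _, (Finset.mem_filter.mp hw).2⟩
  · intro w1 h1' w2 h2' heq
    funext i
    have hii := Finset.ext_iff.mp heq i
    simp only [Finset.mem_filter, Finset.mem_univ, true_and] at hii
    exact Bool.eq_iff_iff.mpr (by simpa using hii)
  · intro S hS
    rw [Finset.mem_powersetCard] at hS
    have hset : (Finset.univ.filter (fun i => decide (i ∈ S) = true)) = S := by
      ext i
      simp
    refine ⟨fun i => decide (i ∈ S), Finset.mem_filter.mpr ⟨Finset.mem_univ _, ?_⟩, hset⟩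
    show (Finset.univ.filter (fun i => decide (i ∈ S) = true)).card = s
    rw [hset]
    exact hS.2

lemma coeff_one_add_pow (m d r : ℕ) (hm : 0 < m) :
    ((1 + X ^ m : ℚ[X]) ^ d).coeff r
    = if m ∣ r then (d.choose (r / m) : ℚ) else 0 := by
  rw [add_comm, add_pow]
  rw [Polynomial.finset_sum_coeff]
  have hterm : ∀ k, ((X : ℚ[X]) ^ m) ^ k * 1 ^ (d - k) * (d.choose k : ℚ[X]) =
      X ^ (m * k) * Polynomial.C (d.choose k : ℚ) := by
    intro k
    rw [one_pow, mul_one, ← pow_mul, Polynomial.C_eq_natCast]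
  rw [Finset.sum_congr rfl (fun k _ => congrArg (fun p => Polynomial.coeff p r) (hterm k))]
  have h2 : ∀ k, ((X : ℚ[X]) ^ (m * k) * Polynomial.C (d.choose k : ℚ)).coeff r
      = if r = m * k then (d.choose k : ℚ) else 0 := by
    intro k
    rw [Polynomial.coeff_mul_C, Polynomial.coeff_X_pow]
    split <;> simp
  rw [Finset.sum_congr rfl (fun k _ => h2 k)]
  by_cases hdvd : m ∣ r
  · obtain ⟨s, rfl⟩ := hdvd
    rw [if_pos (Dvd.intro s rfl), Nat.mul_div_cancel_left s hm]
    have h3 : ∀ k ∈ Finset.range (d + 1),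
        (if m * s = m * k then (d.choose k : ℚ) else 0)
        = if s = k then (d.choose k : ℚ) else 0 := by
      intro k _
      congr 1
      simp [Nat.mul_left_cancel_iff hm]
    rw [Finset.sum_congr rfl h3, Finset.sum_ite_eq]
    by_cases hs : s ∈ Finset.range (d + 1)
    · rw [if_pos hs]
    · rw [if_neg hs]
      rw [Finset.mem_range] at hs
      rw [Nat.choose_eq_zero_of_lt (by omega)]
      simp
  · rw [if_neg hdvd]
    apply Finset.sum_eq_zero
    intro k _
    rw [if_neg (fun h => hdvd ⟨k, h⟩)]

lemma Ad_card {d : ℕ} (hd : d ∣ n) (hd0 : 0 < d) (r : ℕ) :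
    (Finset.univ.filter
      (fun v : Fin n → Bool => hWeight v = r ∧ (cycShift n)^[d] v = v)).card
    = if (n / d) ∣ r then d.choose (r / (n / d)) else 0 := by
  have hn : 0 < n := Nat.pos_of_ne_zero (NeZero.ne n)
  have hle : d ≤ n := Nat.le_of_dvd hn hd
  have hm0 : 0 < n / d := Nat.div_pos hle hd0
  set m := n / d with hm
  have hB : (Finset.univ.filter
      (fun v : Fin n → Bool => hWeight v = r ∧ (cycShift n)^[d] v = v)).card
      = (Finset.univ.filter (fun w : Fin d → Bool => m * hWeight w = r)).card := by
    apply Finset.card_bij'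
      (i := fun v _ => fun i : Fin d => v ⟨i.val, lt_of_lt_of_le i.isLt hle⟩)
      (j := fun w _ => fun j : Fin n => w ⟨j.val % d, Nat.mod_lt _ hd0⟩)
    · intro v hv
      obtain ⟨-, hw, hp⟩ := Finset.mem_filter.mp hv
      refine Finset.mem_filter.mpr ⟨Finset.mem_univ _, ?_⟩
      rw [← hWeight_periodic n hd hd0 v hp, hw]
    · intro w hwB
      obtain ⟨-, hwr⟩ := Finset.mem_filter.mp hwB
      have hper : (cycShift n)^[d] (fun j : Fin n => w ⟨j.val % d, Nat.mod_lt _ hd0⟩)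
          = fun j : Fin n => w ⟨j.val % d, Nat.mod_lt _ hd0⟩ := by
        rw [iter_d_eq_iff]
        intro j
        show w ⟨(j - (d : Fin n)).val % d, _⟩ = w ⟨j.val % d, _⟩
        congr 1
        exact Fin.ext (sub_d_val_mod n hd hd0 j)
      refine Finset.mem_filter.mpr ⟨Finset.mem_univ _, ?_, hper⟩
      rw [hWeight_periodic n hd hd0 _ hper]
      rw [← hwr]
      congr 1
      apply congrArg
      funext i
      congr 1
      exact Fin.ext (by simp [Nat.mod_eq_of_lt i.isLt])
    · intro v hv
      obtain ⟨-, -, hp⟩ := Finset.mem_filter.mp hv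
      funext j
      exact (eq_psi n hd hd0 v hp j).symm
    · intro w hwB
      funext i
      simp only []
      congr 1
      exact Fin.ext (by simp [Nat.mod_eq_of_lt i.isLt])
  rw [hB]
  by_cases hdvd : m ∣ r
  · rw [if_pos hdvd]
    obtain ⟨s, rfl⟩ := hdvd
    have : (Finset.univ.filter (fun w : Fin d → Bool => m * hWeight w = m * s))
        = Finset.univ.filter (fun w : Fin d → Bool => hWeight w = s) := by
      ext w
      simp only [Finset.mem_filter, Finset.mem_univ, true_and]
      exact ⟨fun h => Nat.eq_of_mul_eq_mul_left hm0 h, fun h => by rw [h]⟩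
    rw [this, weight_count, Nat.mul_div_cancel_left s hm0]
  · rw [if_neg hdvd]
    rw [Finset.card_eq_zero]
    ext w
    simp only [Finset.mem_filter, Finset.mem_univ, true_and, Finset.notMem_empty, iff_false]
    intro hc
    exact hdvd ⟨hWeight w, hc.symm⟩

/-- exact-period count -/
noncomputable def fct (r c : ℕ) : ℕ :=
  (Finset.univ.filter (fun v : Fin n → Bool => hWeight v = r ∧ per n v = c)).card

/-- period-divides count -/
noncomputable def gct (r d : ℕ) : ℕ := ∑ c ∈ d.divisors, fct n r c

lemma Ad_eq_gct {d : ℕ} (hd0 : 0 < d) (r : ℕ) :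
    (Finset.univ.filter
      (fun v : Fin n → Bool => hWeight v = r ∧ (cycShift n)^[d] v = v)).card
    = gct n r d := by
  rw [gct]
  rw [Finset.card_eq_sum_card_fiberwise (f := per n) (t := d.divisors) ?hmap]
  case hmap =>
    intro v hv
    obtain ⟨-, -, hp⟩ := Finset.mem_filter.mp hv
    exact Nat.mem_divisors.mpr ⟨(per_dvd_iff n v d).mp hp, by omega⟩
  apply Finset.sum_congr rfl
  intro c hc
  rw [fct]
  congr 1
  ext v
  simp only [Finset.mem_filter, Finset.mem_univ, true_and]
  constructor
  · rintro ⟨⟨hw, -⟩, hp⟩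
    exact ⟨hw, hp⟩
  · rintro ⟨hw, hp⟩
    refine ⟨⟨hw, ?_⟩, hp⟩
    rw [per_dvd_iff, hp]
    exact (Nat.mem_divisors.mp hc).1

lemma moebius_fct (r e : ℕ) (he0 : 0 < e) :
    ∑ d ∈ e.divisors,
      ((ArithmeticFunction.moebius (e / d) : ℤ) : ℚ) * (gct n r d : ℚ)
    = (fct n r e : ℚ) := by
  have H := (ArithmeticFunction.sum_eq_iff_sum_smul_moebius_eq
    (f := fun c => (fct n r c : ℚ)) (g := fun d => (gct n r d : ℚ))).mp
    (fun m hm => by rw [gct]; push_cast; rfl) e he0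
  rw [← H, ← Nat.sum_divisorsAntidiagonal' (f := fun a b =>
    ((ArithmeticFunction.moebius a : ℤ) : ℚ) * (gct n r b : ℚ))]
  apply Finset.sum_congr rfl
  intro x hx
  rw [zsmul_eq_mul]


end Aux

/-!
STATEMENT 9 (Lemma 1, Tavares' cycle-class counting formula).
-/
theorem cycle_class_count
    (n : ℕ) [NeZero n] (r e : ℕ) (he0 : 0 < e) (hen : e ∣ n) (hr : r ≤ n) :
    (numCycleClasses n r e : ℚ)
    = (Polynomial.C ((e : ℚ)⁻¹) *
        ∑ d ∈ e.divisors,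
          Polynomial.C ((ArithmeticFunction.moebius (e / d) : ℤ) : ℚ) *
            (1 + Polynomial.X ^ (n / d)) ^ d).coeff r := by
  have hn : 0 < n := Nat.pos_of_ne_zero (NeZero.ne n)
  rw [Polynomial.coeff_C_mul, Polynomial.finset_sum_coeff]
  have hterm : ∀ d ∈ e.divisors,
      (Polynomial.C ((ArithmeticFunction.moebius (e / d) : ℤ) : ℚ) *
        (1 + Polynomial.X ^ (n / d)) ^ d).coeff r
      = ((ArithmeticFunction.moebius (e / d) : ℤ) : ℚ) * (gct n r d : ℚ) := by
    intro d hd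
    obtain ⟨hde, he0'⟩ := Nat.mem_divisors.mp hd
    have hdn : d ∣ n := hde.trans hen
    have hd0 : 0 < d := Nat.pos_of_dvd_of_pos hde he0
    have hm0 : 0 < n / d := Nat.div_pos (Nat.le_of_dvd hn hdn) hd0
    rw [Polynomial.coeff_C_mul, coeff_one_add_pow _ _ _ hm0]
    rw [← Ad_eq_gct n hd0 r, Ad_card n hdn hd0 r]
    split <;> push_cast <;> ring
  rw [Finset.sum_congr rfl hterm, moebius_fct n r e he0]
  have hfT : fct n r e = numCycleClasses n r e * e := by
    rw [fct, ← T_card n r e]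
    congr 1
    ext v
    simp [cycOrbit_card]
  rw [hfT]
  push_cast
  field_simp
end
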